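/- The harmonic mapping F(z) = z − conj(z)²/6 belongs to K_H: it is a univalent, sense-preserving harmonic mapping of the unit disk 𝔻 with F(0) = 0 and F_z(0) = 1 whose image F(𝔻) is a convex domain. -/

import Mathlib

open Complex MeasureTheory Filter Set Metric Topology

noncomputable section

/-- The open unit disk in the complex plane. -/
def unitDisk : Set ℂ := Metric.ball 0 1

/-- A harmonic mapping on the unit disk: `F = h + conj g` with `h`, `g` analytic on `𝔻`. -/
def IsHarmonicMapOn (F : ℂ → ℂ) : Prop :=
  ∃ h g : ℂ → ℂ, DifferentiableOn ℂ h unitDisk ∧ DifferentiableOn ℂ g unitDisk ∧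
    ∀ z ∈ unitDisk, F z = h z + (starRingEnd ℂ) (g z)

/-- Wirtinger derivative `f_z = (∂_x f - i ∂_y f)/2`. -/
def wderivZ (f : ℂ → ℂ) (z : ℂ) : ℂ :=
  (fderiv ℝ f z 1 - Complex.I * fderiv ℝ f z Complex.I) / 2

/-- Wirtinger derivative `f_z̄ = (∂_x f + i ∂_y f)/2`. -/
def wderivZBar (f : ℂ → ℂ) (z : ℂ) : ℂ :=
  (fderiv ℝ f z 1 + Complex.I * fderiv ℝ f z Complex.I) / 2

/-- Jacobian `J_f = |f_z|² - |f_z̄|²`. -/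
def jacDet (f : ℂ → ℂ) (z : ℂ) : ℝ := ‖wderivZ f z‖ ^ 2 - ‖wderivZBar f z‖ ^ 2

/-- Closed half-line starting at `a` in direction `v`. -/
def closedHalfLine (a v : ℂ) : Set ℂ := {w | ∃ t : ℝ, 0 ≤ t ∧ w = a + t • v}

/-- Open half-line starting at `a` in direction `v`. -/
def openHalfLine (a v : ℂ) : Set ℂ := {w | ∃ t : ℝ, 0 < t ∧ w = a + t • v}

/-- A set is close-to-convex if its complement is a union of closed half-lines whose
corresponding open half-lines are pairwise disjoint. -/
def IsCloseToConvexDomain (D : Set ℂ) : Prop :=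
  ∃ (ι : Type) (a v : ι → ℂ), (∀ i, v i ≠ 0) ∧
    Dᶜ = ⋃ i, closedHalfLine (a i) (v i) ∧
    (Pairwise fun i j => Disjoint (openHalfLine (a i) (v i)) (openHalfLine (a j) (v j)))

/-- Membership in the class `K_H` of convex univalent sense-preserving normalized
harmonic mappings of the unit disk. -/
def IsKH (F : ℂ → ℂ) : Prop :=
  IsHarmonicMapOn F ∧ Set.InjOn F unitDisk ∧ (∀ z ∈ unitDisk, 0 < jacDet F z) ∧
    F 0 = 0 ∧ wderivZ F 0 = 1 ∧ Convex ℝ (F '' unitDisk)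

/-- A bounded Jordan domain with rectifiable boundary. -/
def IsBoundedRectifiableJordanDomain (Ω : Set ℂ) : Prop :=
  IsOpen Ω ∧ IsConnected Ω ∧ Bornology.IsBounded Ω ∧
    ∃ γ : ℝ → ℂ, ContinuousOn γ (Set.Icc 0 1) ∧ Set.InjOn γ (Set.Ico 0 1) ∧
      γ 0 = γ 1 ∧ γ '' Set.Icc 0 1 = frontier Ω ∧ eVariationOn γ (Set.Icc 0 1) ≠ ⊤

/-- `F(z) = o(1/(1-|z|))` as `|z| → 1⁻`, i.e. `(1-|z|) F(z) → 0`. -/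
def LittleOBoundary (F : ℂ → ℂ) : Prop :=
  Filter.Tendsto (fun z : ℂ => ((1 : ℝ) - ‖z‖) • F z)
    (Filter.comap (fun z : ℂ => ‖z‖) (nhdsWithin 1 (Set.Iio 1))) (nhds 0)

/-- `f` has unrestricted boundary limit `L` at the boundary point `e^{iθ}`. -/
def HasBoundaryLimitAt (f : ℂ → ℂ) (θ : ℝ) (L : ℂ) : Prop :=
  Filter.Tendsto f (nhdsWithin (Complex.exp (Complex.I * θ)) unitDisk) (nhds L)

/-- The boundary function of `f` is continuous at `e^{iθ}`:
the unrestricted limit of `f` exists at `e^{iθ}`. -/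
def BoundaryContinuousAt (f : ℂ → ℂ) (θ : ℝ) : Prop := ∃ L, HasBoundaryLimitAt f θ L

/-- `fstar` is (a.e.) the boundary function of `f` on the unit circle,
parametrized by angle. -/
def IsBoundaryFunction (f : ℂ → ℂ) (fstar : ℝ → ℂ) : Prop :=
  ∀ᵐ t : ℝ ∂(volume : Measure ℝ), HasBoundaryLimitAt f t (fstar t)

/-- `φ` has a jump at `θ₀`: the essential one-sided limits exist, are finite and differ. -/
def HasEssJumpAt (φ : ℝ → ℂ) (θ₀ : ℝ) : Prop :=
  ∃ L R : ℂ, L ≠ R ∧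
    Filter.Tendsto φ ((nhdsWithin θ₀ (Set.Iio θ₀)) ⊓ MeasureTheory.ae (volume : Measure ℝ)) (nhds L) ∧
    Filter.Tendsto φ ((nhdsWithin θ₀ (Set.Ioi θ₀)) ⊓ MeasureTheory.ae (volume : Measure ℝ)) (nhds R)


private lemma conj_norm' (z : ℂ) : ‖(starRingEnd ℂ) z‖ = ‖z‖ := by
  simp [Complex.norm_conj]

private lemma hasFDerivAt_exF (z : ℂ) :
    HasFDerivAt (fun w : ℂ => w - (starRingEnd ℂ) w ^ 2 / 6)
      (ContinuousLinearMap.id ℝ ℂ - (6:ℂ)⁻¹ •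
        ((starRingEnd ℂ) z • (Complex.conjCLE.toContinuousLinearMap : ℂ →L[ℝ] ℂ)
          + (starRingEnd ℂ) z • (Complex.conjCLE.toContinuousLinearMap : ℂ →L[ℝ] ℂ))) z := by
  have hconj : HasFDerivAt (fun w : ℂ => (starRingEnd ℂ) w)
      (Complex.conjCLE.toContinuousLinearMap : ℂ →L[ℝ] ℂ) z :=
    Complex.conjCLE.toContinuousLinearMap.hasFDerivAt
  have h3 := (hconj.mul hconj).const_mul ((6:ℂ)⁻¹)
  have h4 := (hasFDerivAt_id z).sub h3
  have hfun : (fun w : ℂ => w - (starRingEnd ℂ) w ^ 2 / 6)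
      = (fun w : ℂ => w - (6:ℂ)⁻¹ * ((starRingEnd ℂ) w * (starRingEnd ℂ) w)) := by
    funext w; ring
  rw [hfun]
  exact h4

private lemma fderiv_exF_one (z : ℂ) :
    fderiv ℝ (fun w : ℂ => w - (starRingEnd ℂ) w ^ 2 / 6) z 1 = 1 - (starRingEnd ℂ) z / 3 := by
  rw [(hasFDerivAt_exF z).fderiv]
  simp [ContinuousLinearMap.sub_apply, ContinuousLinearMap.smul_apply,
    ContinuousLinearMap.add_apply, ContinuousLinearMap.id_apply,
    ContinuousLinearEquiv.coe_coe, Complex.conjCLE_apply, smul_eq_mul]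
  ring

private lemma fderiv_exF_I (z : ℂ) :
    fderiv ℝ (fun w : ℂ => w - (starRingEnd ℂ) w ^ 2 / 6) z Complex.I
      = Complex.I + (starRingEnd ℂ) z * Complex.I / 3 := by
  rw [(hasFDerivAt_exF z).fderiv]
  simp [ContinuousLinearMap.sub_apply, ContinuousLinearMap.smul_apply,
    ContinuousLinearMap.add_apply, ContinuousLinearMap.id_apply,
    ContinuousLinearEquiv.coe_coe, Complex.conjCLE_apply, Complex.conj_I, smul_eq_mul]
  ring

private lemma wderivZ_exF (z : ℂ) :
    wderivZ (fun w : ℂ => w - (starRingEnd ℂ) w ^ 2 / 6) z = 1 := by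
  rw [wderivZ, fderiv_exF_one, fderiv_exF_I]
  have hI : Complex.I * Complex.I = -1 := Complex.I_mul_I
  linear_combination (-(1:ℂ)/2 - (starRingEnd ℂ) z / 6) * hI

private lemma wderivZBar_exF (z : ℂ) :
    wderivZBar (fun w : ℂ => w - (starRingEnd ℂ) w ^ 2 / 6) z = -((starRingEnd ℂ) z) / 3 := by
  rw [wderivZBar, fderiv_exF_one, fderiv_exF_I]
  have hI : Complex.I * Complex.I = -1 := Complex.I_mul_I
  linear_combination ((1:ℂ)/2 + (starRingEnd ℂ) z / 6) * hI

set_option maxHeartbeats 2000000 in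
private lemma exF_convex :
    Convex ℝ ((fun z : ℂ => z - (starRingEnd ℂ) z ^ 2 / 6) '' unitDisk) := by
  intro w1 hw1 w2 hw2 a b ha hb hab
  obtain ⟨z1, hz1, rfl⟩ := hw1
  obtain ⟨z2, hz2, rfl⟩ := hw2
  have hb1 : b = 1 - a := by linarith
  subst hb1
  simp only [unitDisk, Metric.mem_ball, dist_zero_right] at hz1 hz2
  have ha1 : a ≤ 1 := by linarith
  set z0 : ℂ := (a:ℂ) * z1 + ((1-a : ℝ):ℂ) * z2 with hz0def
  set m : ℝ := (a * (1-a)) * ‖z1 - z2‖^2 with hmdef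
  set r : ℝ := m/3 with hrdef
  set c : ℂ := -((a:ℂ) * ((1-a:ℝ):ℂ)) * ((starRingEnd ℂ) z1 - (starRingEnd ℂ) z2)^2 with hcdef
  clear_value z0 m r c
  have hm0 : 0 ≤ m := by
    have h1 : 0 ≤ a * (1-a) := mul_nonneg ha hb
    have h2 : (0:ℝ) ≤ ‖z1 - z2‖^2 := sq_nonneg _
    rw [hmdef]; positivity
  have hab4 : a * (1-a) ≤ 1/4 := by nlinarith [sq_nonneg (2*a - 1)]
  have hd2 : ‖z1 - z2‖^2 ≤ 4 := by
    have h := norm_sub_le z1 z2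
    nlinarith [norm_nonneg (z1 - z2), norm_nonneg z1, norm_nonneg z2]
  have hm1 : m ≤ 1 := by
    have := mul_le_mul hab4 hd2 (sq_nonneg _) (by norm_num)
    rw [hmdef]; linarith
  have hr0 : 0 ≤ r := by rw [hrdef]; linarith
  have hr3 : r ≤ 1/3 := by rw [hrdef]; linarith
  have hcnorm : ‖c‖ = m := by
    rw [hcdef, hmdef]
    have h1 : (starRingEnd ℂ) z1 - (starRingEnd ℂ) z2 = (starRingEnd ℂ) (z1 - z2) :=
      (map_sub _ _ _).symm
    rw [h1, neg_mul, norm_neg, norm_mul, norm_pow, norm_mul, conj_norm', Complex.norm_real,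
      Complex.norm_real, Real.norm_eq_abs, Real.norm_eq_abs, _root_.abs_of_nonneg ha,
      _root_.abs_of_nonneg hb]
  have hz0sq : ‖z0‖^2 = a * ‖z1‖^2 + (1-a) * ‖z2‖^2 - m := by
    have e : ∀ w : ℂ, ‖w‖^2 = Complex.normSq w := fun w => by
      rw [Complex.sq_norm]
    rw [hz0def, hmdef, e, e, e, e]
    simp only [Complex.normSq_apply, Complex.add_re, Complex.add_im, Complex.mul_re,
      Complex.mul_im, Complex.ofReal_re, Complex.ofReal_im, Complex.sub_re, Complex.sub_im]
    ring
  have hP : a * ‖z1‖^2 + (1-a) * ‖z2‖^2 < 1 := by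
    have e1 : ‖z1‖^2 < 1 := by nlinarith [norm_nonneg z1]
    have e2 : ‖z2‖^2 < 1 := by nlinarith [norm_nonneg z2]
    rcases eq_or_lt_of_le ha with h | h
    · rw [← h]; nlinarith
    · nlinarith [mul_pos h (by linarith : (0:ℝ) < 1 - ‖z1‖^2),
        mul_nonneg hb (by linarith : (0:ℝ) ≤ 1 - ‖z2‖^2)]
  have hz0lt : ‖z0‖ < 1 - r := by
    have h1 : ‖z0‖^2 < (1 - r)^2 := by
      rw [hz0sq, hrdef]; nlinarith
    nlinarith [norm_nonneg z0]
  have hz0le1 : ‖z0‖ ≤ 1 := by linarith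
  set T : ℂ → ℂ := fun d =>
    (c + 2 * (starRingEnd ℂ) z0 * (starRingEnd ℂ) d + (starRingEnd ℂ) d ^ 2) / 6 with hTdef
  clear_value T
  have hmem : ∀ d : ℂ, d ∈ Metric.closedBall (0:ℂ) r → T d ∈ Metric.closedBall (0:ℂ) r := by
    intro d hd
    rw [Metric.mem_closedBall, dist_zero_right] at hd ⊢
    have h1 : ‖T d‖ ≤ (‖c‖ + 2 * ‖z0‖ * ‖d‖ + ‖d‖^2) / 6 := by
      rw [hTdef]
      simp only
      rw [norm_div]
      have h6 : ‖(6:ℂ)‖ = 6 := by norm_num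
      rw [h6]
      have h2 : ‖c + 2 * (starRingEnd ℂ) z0 * (starRingEnd ℂ) d + (starRingEnd ℂ) d ^ 2‖
          ≤ ‖c‖ + ‖2 * (starRingEnd ℂ) z0 * (starRingEnd ℂ) d‖ + ‖(starRingEnd ℂ) d ^ 2‖ :=
        norm_add₃_le
      have h3 : ‖2 * (starRingEnd ℂ) z0 * (starRingEnd ℂ) d‖ = 2 * ‖z0‖ * ‖d‖ := by
        rw [norm_mul, norm_mul, conj_norm', conj_norm']
        norm_num
      have h4 : ‖(starRingEnd ℂ) d ^ 2‖ = ‖d‖^2 := by rw [norm_pow, conj_norm']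
      rw [h3, h4] at h2
      linarith
    have h5 : ‖z0‖ * ‖d‖ ≤ 1 * r := mul_le_mul hz0le1 hd (norm_nonneg d) zero_le_one
    have h6 : ‖d‖^2 ≤ r^2 := pow_le_pow_left₀ (norm_nonneg d) hd 2
    rw [hcnorm] at h1
    have hrm : 3 * r = m := by rw [hrdef]; ring
    have h7 : r^2 ≤ r := by nlinarith [mul_le_mul_of_nonneg_left hr3 hr0]
    linarith
  have hlip : ∀ x y : ℂ, x ∈ Metric.closedBall (0:ℂ) r → y ∈ Metric.closedBall (0:ℂ) r →
      ‖T x - T y‖ ≤ (1/2) * ‖x - y‖ := by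
    intro x y hx hy
    rw [Metric.mem_closedBall, dist_zero_right] at hx hy
    have key : T x - T y = ((starRingEnd ℂ) (x - y)) *
        (2 * (starRingEnd ℂ) z0 + (starRingEnd ℂ) x + (starRingEnd ℂ) y) / 6 := by
      rw [hTdef]; simp only [map_sub]; ring
    rw [key, norm_div, norm_mul, conj_norm']
    have h6 : ‖(6:ℂ)‖ = 6 := by norm_num
    rw [h6]
    have hs : ‖2 * (starRingEnd ℂ) z0 + (starRingEnd ℂ) x + (starRingEnd ℂ) y‖
        ≤ 2 * ‖z0‖ + ‖x‖ + ‖y‖ := by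
      have := norm_add₃_le (a := 2 * (starRingEnd ℂ) z0) (b := (starRingEnd ℂ) x)
        (c := (starRingEnd ℂ) y)
      have h2 : ‖2 * (starRingEnd ℂ) z0‖ = 2 * ‖z0‖ := by
        rw [norm_mul, conj_norm']; norm_num
      rw [h2, conj_norm', conj_norm'] at this
      exact this
    have hb1 : 2 * ‖z0‖ + ‖x‖ + ‖y‖ ≤ 3 := by linarith
    have hb2 : (0:ℝ) ≤ ‖x - y‖ := norm_nonneg _
    have hb3 := mul_le_mul_of_nonneg_left (le_trans hs hb1) hb2
    linarith
  haveI : CompleteSpace (Metric.closedBall (0:ℂ) r) :=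
    Metric.isClosed_closedBall.completeSpace_coe
  haveI : Nonempty (Metric.closedBall (0:ℂ) r) := ⟨⟨0, Metric.mem_closedBall_self hr0⟩⟩
  set T' : Metric.closedBall (0:ℂ) r → Metric.closedBall (0:ℂ) r :=
    fun d => ⟨T d.1, hmem d.1 d.2⟩ with hT'def
  have hcontr : ContractingWith (1/2) T' := by
    constructor
    · rw [← NNReal.coe_lt_coe]; norm_num
    · apply LipschitzWith.of_dist_le_mul
      intro x y
      have h1 : dist (T' x) (T' y) = ‖T x.1 - T y.1‖ := by
        rw [Subtype.dist_eq, dist_eq_norm]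
      have h2 : dist x y = ‖x.1 - y.1‖ := by rw [Subtype.dist_eq, dist_eq_norm]
      rw [h1, h2]
      have h3 := hlip x.1 y.1 x.2 y.2
      have h4 : ((1/2 : NNReal) : ℝ) = 1/2 := by norm_num
      rw [h4]
      exact h3
  set δ0 := ContractingWith.fixedPoint T' hcontr with hδ0def
  have hfix0 : T' δ0 = δ0 := hcontr.fixedPoint_isFixedPt
  have hδr : ‖(δ0 : ℂ)‖ ≤ r := by
    have := δ0.2
    rwa [Metric.mem_closedBall, dist_zero_right] at this
  have hfix : T (δ0 : ℂ) = (δ0 : ℂ) := congrArg Subtype.val hfix0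
  refine ⟨z0 + (δ0 : ℂ), ?_, ?_⟩
  · simp only [unitDisk, Metric.mem_ball, dist_zero_right]
    calc ‖z0 + (δ0:ℂ)‖ ≤ ‖z0‖ + ‖(δ0:ℂ)‖ := norm_add_le _ _
      _ < 1 := by linarith
  · have hcz0 : (starRingEnd ℂ) z0
        = (a:ℂ) * (starRingEnd ℂ) z1 + ((1-a:ℝ):ℂ) * (starRingEnd ℂ) z2 := by
      rw [hz0def]; simp [map_add, map_mul, Complex.conj_ofReal]
    rw [hTdef, hcz0, hcdef] at hfix
    show (z0 + (δ0:ℂ)) - (starRingEnd ℂ) (z0 + (δ0:ℂ)) ^ 2 / 6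
        = a • (z1 - (starRingEnd ℂ) z1 ^ 2 / 6) + (1-a) • (z2 - (starRingEnd ℂ) z2 ^ 2 / 6)
    rw [Complex.real_smul, Complex.real_smul, map_add, hcz0, hz0def]
    push_cast at hfix ⊢
    linear_combination -hfix

/-- The harmonic mapping `F(z) = z - conj(z)²/6` belongs to `K_H`: it is a univalent,
sense-preserving harmonic mapping of `𝔻` with `F(0) = 0`, `F_z(0) = 1` and convex image. -/
theorem example_mapping_mem_KH :
    IsKH (fun z : ℂ => z - (starRingEnd ℂ z) ^ 2 / 6) := by
  refine ⟨?_, ?_, ?_, ?_, ?_, ?_⟩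
  · -- harmonic
    refine ⟨fun z => z, fun z => -(z^2)/6, differentiable_id.differentiableOn,
      (((differentiable_pow 2).neg).div_const 6).differentiableOn, ?_⟩
    intro z _
    simp only [map_div₀, map_neg, map_pow, map_ofNat]
    ring
  · -- injective
    intro z1 hz1 z2 hz2 heq
    simp only [unitDisk, Metric.mem_ball, dist_zero_right] at hz1 hz2
    simp only at heq
    have h3 : z1 - z2 = ((starRingEnd ℂ) z1 - (starRingEnd ℂ) z2) *
        ((starRingEnd ℂ) z1 + (starRingEnd ℂ) z2) / 6 := by linear_combination heq
    have hc : (starRingEnd ℂ) z1 - (starRingEnd ℂ) z2 = (starRingEnd ℂ) (z1 - z2) :=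
      (map_sub _ _ _).symm
    have h6n : ‖(6:ℂ)‖ = 6 := by norm_num
    have h4 : ‖z1 - z2‖ = ‖z1 - z2‖ * ‖(starRingEnd ℂ) z1 + (starRingEnd ℂ) z2‖ / 6 := by
      conv_lhs => rw [h3]
      rw [norm_div, norm_mul, hc, conj_norm', h6n]
    have h5 : ‖(starRingEnd ℂ) z1 + (starRingEnd ℂ) z2‖ ≤ ‖z1‖ + ‖z2‖ := by
      calc ‖(starRingEnd ℂ) z1 + (starRingEnd ℂ) z2‖
          ≤ ‖(starRingEnd ℂ) z1‖ + ‖(starRingEnd ℂ) z2‖ := norm_add_le _ _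
        _ = ‖z1‖ + ‖z2‖ := by rw [conj_norm', conj_norm']
    by_contra hne
    have h6 : 0 < ‖z1 - z2‖ := by
      rw [norm_pos_iff, sub_ne_zero]; exact hne
    nlinarith
  · -- sense-preserving
    intro z hz
    simp only [unitDisk, Metric.mem_ball, dist_zero_right] at hz
    rw [jacDet, wderivZ_exF, wderivZBar_exF]
    rw [norm_div, norm_neg, conj_norm', norm_one]
    have h3 : ‖(3:ℂ)‖ = 3 := by norm_num
    rw [h3]
    nlinarith [norm_nonneg z]
  · -- F 0 = 0
    simp
  · -- normalized derivative
    exact wderivZ_exF 0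
  · -- convex image
    exact exF_convex

end
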